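/- Let C ≥ 2 and let ℓ : Δ^{C−1} → ℝ^C be a proper loss such that ℓ ∘ Π^{-1} is continuously differentiable on the interior of Δ̃^{C−1}, with ℓ_{−C} the vector of the first C−1 partial losses and ℓ_C the last partial loss, and define the projected conditional Bayes risk L̲̃(p̃) = L(Π^{-1}(p̃), Π^{-1}(p̃)). Then L̲̃ is twice differentiable on the interior of Δ̃^{C−1} and its Hessian satisfies H_{L̲̃}(p̃) = (I_{C−1} + 1_{C−1} p̃^T / p_C) J_{ℓ_{−C} ∘ Π^{-1}}(p̃), where p_C = 1 − Σ_{i=1}^{C−1} p̃_i, I_{C−1} is the identity matrix and 1_{C−1} the all-ones vector. -/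

import Mathlib

noncomputable section

/-- The probability simplex `Δ^C ⊆ ℝ^{d+1}` (here `C = d+1`). -/
def simplex (n : ℕ) : Set (Fin n → ℝ) :=
  {p | (∀ i, 0 ≤ p i) ∧ ∑ i, p i = 1}

/-- The interior of the projected probability simplex `Δ̃^{C-1} ⊆ ℝ^{C-1}` (here `C-1 = d`). -/
def projInterior (d : ℕ) : Set (Fin d → ℝ) :=
  {p | (∀ i, 0 < p i) ∧ ∑ i, p i < 1}

/-- The inverse projection `Π⁻¹ : Δ̃^{C-1} → Δ^{C-1}`,
`p̃ ↦ (p̃₁, …, p̃_{C-1}, 1 - ∑ i, p̃ i)`. -/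
def piInv (d : ℕ) (p : Fin d → ℝ) : Fin (d + 1) → ℝ :=
  Fin.snoc p (1 - ∑ i, p i)

/-- The conditional risk `L(p,q) = ∑ i, p i * ℓ_i(q)` of a loss `ℓ`. -/
def condRisk {n : ℕ} (ℓ : (Fin n → ℝ) → (Fin n → ℝ)) (p q : Fin n → ℝ) : ℝ :=
  ∑ i, p i * ℓ q i

/-- A loss is proper if `L(p,p) ≤ L(p,q)` on the simplex. -/
def Proper {n : ℕ} (ℓ : (Fin n → ℝ) → (Fin n → ℝ)) : Prop :=
  ∀ p ∈ simplex n, ∀ q ∈ simplex n, condRisk ℓ p p ≤ condRisk ℓ p q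

/-- The composition `ℓ ∘ Π⁻¹ : ℝ^{C-1} → ℝ^C`. -/
def lossComp (d : ℕ) (ℓ : (Fin (d + 1) → ℝ) → (Fin (d + 1) → ℝ)) :
    (Fin d → ℝ) → (Fin (d + 1) → ℝ) :=
  fun x => ℓ (piInv d x)

/-- The projected conditional Bayes risk `L̲̃(p̃) = L(Π⁻¹ p̃, Π⁻¹ p̃)`. -/
def projBayes (d : ℕ) (ℓ : (Fin (d + 1) → ℝ) → (Fin (d + 1) → ℝ)) :
    (Fin d → ℝ) → ℝ :=
  fun x => condRisk ℓ (piInv d x) (piInv d x)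

/-- The gradient `∇L̲̃` of the projected conditional Bayes risk. -/
def gradPB (d : ℕ) (ℓ : (Fin (d + 1) → ℝ) → (Fin (d + 1) → ℝ)) :
    (Fin d → ℝ) → (Fin d → ℝ) :=
  fun x i => fderiv ℝ (projBayes d ℓ) x (Pi.single i 1)

/-- The Hessian `H_{L̲̃}(x) i j = ∂_j ∂_i L̲̃ (x)` of the projected conditional Bayes risk. -/
def hessPB (d : ℕ) (ℓ : (Fin (d + 1) → ℝ) → (Fin (d + 1) → ℝ))
    (x : Fin d → ℝ) (i j : Fin d) : ℝ :=
  fderiv ℝ (gradPB d ℓ) x (Pi.single j 1) i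

/-- The canonical link `ψ̃ = -∇L̲̃`. -/
def canLink (d : ℕ) (ℓ : (Fin (d + 1) → ℝ) → (Fin (d + 1) → ℝ)) :
    (Fin d → ℝ) → (Fin d → ℝ) :=
  fun x i => -(gradPB d ℓ x i)

end


open Filter Topology ContinuousLinearMap

lemma projInterior_isOpen (d : ℕ) : IsOpen (projInterior d) := by
  have h1 : projInterior d = (⋂ i, {p : Fin d → ℝ | 0 < p i}) ∩ {p | ∑ i, p i < 1} := by
    ext p; simp [projInterior, Set.mem_iInter]
  rw [h1]
  exact (isOpen_iInter_of_finite fun i =>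
      isOpen_lt continuous_const (continuous_apply i)).inter
    (isOpen_lt (continuous_finset_sum _ fun i _ => continuous_apply i) continuous_const)

lemma piInv_mem_simplex {d : ℕ} {x : Fin d → ℝ} (hx : x ∈ projInterior d) :
    piInv d x ∈ simplex (d + 1) := by
  obtain ⟨h1, h2⟩ := hx
  constructor
  · intro i
    refine Fin.lastCases ?_ ?_ i
    · simp only [piInv, Fin.snoc_last]; linarith
    · intro k; simp only [piInv, Fin.snoc_castSucc]; exact (h1 k).le
  · rw [Fin.sum_univ_castSucc]
    simp [piInv]

/-- Stationarity of a proper loss. -/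
lemma stationarity (d : ℕ) (ℓ : (Fin (d + 1) → ℝ) → (Fin (d + 1) → ℝ)) (hproper : Proper ℓ)
    (hdiff : ∀ pt ∈ projInterior d, ContDiffAt ℝ 1 (lossComp d ℓ) pt)
    {x : Fin d → ℝ} (hx : x ∈ projInterior d) (v : Fin d → ℝ) :
    ∑ i, piInv d x i * fderiv ℝ (lossComp d ℓ) x v i = 0 := by
  have hfx : DifferentiableAt ℝ (lossComp d ℓ) x := (hdiff x hx).differentiableAt one_ne_zero
  have hcomp : ∀ i : Fin (d + 1), HasFDerivAt (fun y => lossComp d ℓ y i)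
      ((proj i).comp (fderiv ℝ (lossComp d ℓ) x)) x :=
    fun i => (hasFDerivAt_apply (𝕜 := ℝ) i (lossComp d ℓ x)).comp x hfx.hasFDerivAt
  have hg : HasFDerivAt (fun y => ∑ i, piInv d x i * lossComp d ℓ y i)
      (∑ i, piInv d x i • ((proj i).comp (fderiv ℝ (lossComp d ℓ) x))) x :=
    HasFDerivAt.fun_sum fun i _ => (hcomp i).const_mul (piInv d x i)
  have hmin : IsLocalMin (fun y => ∑ i, piInv d x i * lossComp d ℓ y i) x := by
    filter_upwards [(projInterior_isOpen d).mem_nhds hx] with y hy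
    exact hproper _ (piInv_mem_simplex hx) _ (piInv_mem_simplex hy)
  have h0 := hmin.fderiv_eq_zero
  rw [hg.fderiv] at h0
  have h1 := congrArg (fun L : (Fin d → ℝ) →L[ℝ] ℝ => L v) h0
  simpa [ContinuousLinearMap.sum_apply, smul_eq_mul] using h1

/-- The gradient of the projected Bayes risk. -/
lemma gradPB_eq (d : ℕ) (ℓ : (Fin (d + 1) → ℝ) → (Fin (d + 1) → ℝ)) (hproper : Proper ℓ)
    (hdiff : ∀ pt ∈ projInterior d, ContDiffAt ℝ 1 (lossComp d ℓ) pt)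
    {x : Fin d → ℝ} (hx : x ∈ projInterior d) :
    DifferentiableAt ℝ (projBayes d ℓ) x ∧
      gradPB d ℓ x = fun j => lossComp d ℓ x j.castSucc - lossComp d ℓ x (Fin.last d) := by
  have hfx : DifferentiableAt ℝ (lossComp d ℓ) x := (hdiff x hx).differentiableAt one_ne_zero
  set f' := fderiv ℝ (lossComp d ℓ) x with hf'
  have hcomp : ∀ i : Fin (d + 1), HasFDerivAt (fun y => lossComp d ℓ y i)
      ((proj i).comp f') x :=
    fun i => (hasFDerivAt_apply (𝕜 := ℝ) i (lossComp d ℓ x)).comp x hfx.hasFDerivAt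
  have hrepr : projBayes d ℓ = fun y =>
      (∑ k : Fin d, y k * lossComp d ℓ y k.castSucc)
        + (1 - ∑ k, y k) * lossComp d ℓ y (Fin.last d) := by
    funext y
    simp only [projBayes, condRisk, lossComp]
    rw [Fin.sum_univ_castSucc]
    simp [piInv]
  have hsum : HasFDerivAt (fun y : Fin d → ℝ => ∑ k, y k)
      (∑ k, (proj k : (Fin d → ℝ) →L[ℝ] ℝ)) x :=
    HasFDerivAt.fun_sum fun k _ => hasFDerivAt_apply k x
  have hPB : HasFDerivAt (projBayes d ℓ)
      ((∑ k : Fin d, (x k • ((proj k.castSucc).comp f')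
          + lossComp d ℓ x k.castSucc • (proj k : (Fin d → ℝ) →L[ℝ] ℝ)))
        + ((1 - ∑ k, x k) • ((proj (Fin.last d)).comp f')
          + lossComp d ℓ x (Fin.last d) • (-(∑ k, (proj k : (Fin d → ℝ) →L[ℝ] ℝ))))) x := by
    rw [hrepr]
    exact (HasFDerivAt.fun_sum fun k _ =>
        (hasFDerivAt_apply k x).mul (hcomp k.castSucc)).add
      ((hsum.const_sub 1).mul (hcomp (Fin.last d)))
  have key : ∀ v : Fin d → ℝ,
      ∑ k : Fin d, x k * f' v k.castSucc + (1 - ∑ k, x k) * f' v (Fin.last d) = 0 := by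
    intro v
    have := stationarity d ℓ hproper hdiff hx v
    rw [Fin.sum_univ_castSucc] at this
    simpa [piInv] using this
  refine ⟨hPB.differentiableAt, ?_⟩
  funext j
  simp only [gradPB]
  rw [hPB.fderiv]
  simp only [ContinuousLinearMap.add_apply, ContinuousLinearMap.sum_apply,
    ContinuousLinearMap.smul_apply, ContinuousLinearMap.comp_apply,
    ContinuousLinearMap.proj_apply, ContinuousLinearMap.neg_apply, smul_eq_mul]
  have h1 : ∑ k : Fin d, Pi.single j (1 : ℝ) k = 1 := by
    simp [Pi.single_apply]
  have h2 : ∑ k : Fin d, (x k * f' (Pi.single j 1) k.castSucc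
      + lossComp d ℓ x k.castSucc * (Pi.single j 1 : Fin d → ℝ) k)
      = ∑ k : Fin d, x k * f' (Pi.single j 1) k.castSucc + lossComp d ℓ x j.castSucc := by
    rw [Finset.sum_add_distrib]
    congr 1
    simp [Pi.single_apply, mul_ite]
  rw [h2, h1]
  have := key (Pi.single j 1)
  ring_nf
  ring_nf at this
  linarith

theorem stmt_6_aux : True := trivial

/-- For a proper loss with `ℓ ∘ Π⁻¹` continuously differentiable on the interior of the
projected simplex, `L̲̃` is twice differentiable there, with Hessian
`H_{L̲̃}(pt) = (I_{C-1} + 1_{C-1} ptᵀ / p_C) J_{ℓ₋C ∘ Π⁻¹}(pt)`, where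
`p_C = 1 - ∑ i, pt i`. -/

theorem stmt_6 (d : ℕ) (hd : 1 ≤ d)
    (ℓ : (Fin (d + 1) → ℝ) → (Fin (d + 1) → ℝ)) (hproper : Proper ℓ)
    (hdiff : ∀ pt ∈ projInterior d, ContDiffAt ℝ 1 (lossComp d ℓ) pt) :
    ∀ pt ∈ projInterior d,
      DifferentiableAt ℝ (projBayes d ℓ) pt ∧
      DifferentiableAt ℝ (gradPB d ℓ) pt ∧
      ∀ i j : Fin d,
        hessPB d ℓ pt i j
          = fderiv ℝ (lossComp d ℓ) pt (Pi.single j 1) i.castSucc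
            + (∑ k : Fin d,
                pt k * fderiv ℝ (lossComp d ℓ) pt (Pi.single j 1) k.castSucc)
              / (1 - ∑ k, pt k) := by
  intro pt hpt
  have hfx : DifferentiableAt ℝ (lossComp d ℓ) pt := (hdiff pt hpt).differentiableAt one_ne_zero
  set f' := fderiv ℝ (lossComp d ℓ) pt with hf'
  have hcomp : ∀ i : Fin (d + 1), HasFDerivAt (fun y => lossComp d ℓ y i)
      ((proj i).comp f') pt :=
    fun i => (hasFDerivAt_apply (𝕜 := ℝ) i (lossComp d ℓ pt)).comp pt hfx.hasFDerivAt
  have hGder : HasFDerivAt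
      (fun x (i : Fin d) => lossComp d ℓ x i.castSucc - lossComp d ℓ x (Fin.last d))
      (ContinuousLinearMap.pi fun i : Fin d =>
        (proj i.castSucc).comp f' - (proj (Fin.last d)).comp f') pt :=
    hasFDerivAt_pi.2 fun i => (hcomp i.castSucc).sub (hcomp (Fin.last d))
  have heq : gradPB d ℓ =ᶠ[𝓝 pt]
      fun x (i : Fin d) => lossComp d ℓ x i.castSucc - lossComp d ℓ x (Fin.last d) := by
    filter_upwards [(projInterior_isOpen d).mem_nhds hpt] with y hy
    exact (gradPB_eq d ℓ hproper hdiff hy).2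
  refine ⟨(gradPB_eq d ℓ hproper hdiff hpt).1, ?_, ?_⟩
  · exact heq.differentiableAt_iff.2 hGder.differentiableAt
  · intro i j
    have hpos : 0 < 1 - ∑ k, pt k := by
      have := hpt.2; linarith
    have key : ∑ k : Fin d, pt k * f' (Pi.single j 1) k.castSucc
        + (1 - ∑ k, pt k) * f' (Pi.single j 1) (Fin.last d) = 0 := by
      have := stationarity d ℓ hproper hdiff hpt (Pi.single j 1)
      rw [Fin.sum_univ_castSucc] at this
      simpa [piInv] using this
    have hfe : fderiv ℝ (gradPB d ℓ) pt
        = ContinuousLinearMap.pi fun i : Fin d =>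
            (proj i.castSucc).comp f' - (proj (Fin.last d)).comp f' := by
      rw [heq.fderiv_eq, hGder.fderiv]
    simp only [hessPB, hf']
    rw [hfe]
    simp only [ContinuousLinearMap.pi_apply, ContinuousLinearMap.sub_apply,
      ContinuousLinearMap.comp_apply, ContinuousLinearMap.proj_apply]
    rw [← hf']
    have hB : f' (Pi.single j 1) (Fin.last d)
        = -((∑ k : Fin d, pt k * f' (Pi.single j 1) k.castSucc) / (1 - ∑ k, pt k)) := by
      field_simp
      linarith
    rw [hB]
    ring
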